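/- Let E be a finite-dimensional real inner product space, let J : E → E be a self-adjoint positive-definite linear operator (the square root of the compliance tensor K = J ∘ J), and let α > 0 and β > 0. Define the strain-limiting response F : E → E by F(σ) = (1 + β^α·‖J σ‖^α)^(−1/α) • J(J σ). Then F is strictly monotone: for all σ₁, σ₂ ∈ E with σ₁ ≠ σ₂, the inner product ⟨F(σ₁) − F(σ₂), σ₁ − σ₂⟩ is strictly positive. -/
import Mathlib


open Real Filter Topology Set
open scoped RealInnerProductSpace

private lemma g_strictMono_aux (α β : ℝ) (hα : 0 < α) (hβ : 0 < β)
    {s t : ℝ} (hs : 0 ≤ s) (hst : s < t) :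
    s * (1 + β ^ α * s ^ α) ^ (-1 / α) < t * (1 + β ^ α * t ^ α) ^ (-1 / α) := by
  have ht : 0 < t := lt_of_le_of_lt hs hst
  have hc : 0 < β ^ α := Real.rpow_pos_of_pos hβ α
  have hAs : 0 ≤ s ^ α := Real.rpow_nonneg hs α
  have hAt : 0 < t ^ α := Real.rpow_pos_of_pos ht α
  have hds : 0 < 1 + β ^ α * s ^ α := by positivity
  have hdt : 0 < 1 + β ^ α * t ^ α := by positivity
  have hws : 0 < (1 + β ^ α * s ^ α) ^ (-1 / α) := Real.rpow_pos_of_pos hds _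
  have hwt : 0 < (1 + β ^ α * t ^ α) ^ (-1 / α) := Real.rpow_pos_of_pos hdt _
  have hlt : s ^ α < t ^ α := Real.rpow_lt_rpow hs hst hα
  by_contra h
  push_neg at h
  have hpow : (t * (1 + β ^ α * t ^ α) ^ (-1 / α)) ^ α
      ≤ (s * (1 + β ^ α * s ^ α) ^ (-1 / α)) ^ α :=
    Real.rpow_le_rpow (by positivity) h hα.le
  have e : ∀ x : ℝ, 0 < x → (x ^ (-1 / α)) ^ α = x⁻¹ := by
    intro x hx
    rw [← Real.rpow_mul hx.le, div_mul_cancel₀ _ hα.ne', Real.rpow_neg_one]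
  rw [Real.mul_rpow ht.le hwt.le, Real.mul_rpow hs hws.le, e _ hds, e _ hdt] at hpow
  rw [← div_eq_mul_inv, ← div_eq_mul_inv, div_le_div_iff₀ hdt hds] at hpow
  nlinarith [hpow, hlt, hc, hAs, hAt.le]

/-- With `J` a self-adjoint positive-definite operator (square root of the
compliance tensor `K = J ∘ J`), the strain-limiting response
`F(σ) = (1 + β^α ‖Jσ‖^α)^(-1/α) • J(Jσ)` is strictly monotone. -/
theorem strainLimiting_compliance_strictly_monotone
    {E : Type*} [NormedAddCommGroup E] [InnerProductSpace ℝ E]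
    [FiniteDimensional ℝ E]
    (J : E →L[ℝ] E) (hsym : ∀ x y : E, ⟪J x, y⟫ = ⟪x, J y⟫)
    (hpos : ∀ x : E, x ≠ 0 → 0 < ⟪J x, x⟫)
    (α β : ℝ) (hα : 0 < α) (hβ : 0 < β)
    (σ₁ σ₂ : E) (hne : σ₁ ≠ σ₂) :
    0 < ⟪(1 + β ^ α * ‖J σ₁‖ ^ α) ^ (-1 / α) • J (J σ₁) -
          (1 + β ^ α * ‖J σ₂‖ ^ α) ^ (-1 / α) • J (J σ₂), σ₁ - σ₂⟫ := by
  set u := J σ₁ with hu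
  set v := J σ₂ with hv
  have huv : u ≠ v := by
    intro h
    have h0 : J (σ₁ - σ₂) = 0 := by rw [map_sub, ← hu, ← hv, h, sub_self]
    have := hpos (σ₁ - σ₂) (sub_ne_zero.mpr hne)
    rw [h0, inner_zero_left] at this
    exact lt_irrefl 0 this
  set a := ‖u‖ with ha
  set b := ‖v‖ with hb
  set fa := (1 + β ^ α * a ^ α) ^ (-1 / α) with hfa
  set fb := (1 + β ^ α * b ^ α) ^ (-1 / α) with hfb
  have hfa0 : 0 < fa := Real.rpow_pos_of_pos (by positivity) _
  have hfb0 : 0 < fb := Real.rpow_pos_of_pos (by positivity) _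
  have h1 : ⟪J u, σ₁ - σ₂⟫ = ⟪u, u - v⟫ := by rw [hsym, map_sub]
  have h2 : ⟪J v, σ₁ - σ₂⟫ = ⟪v, u - v⟫ := by rw [hsym, map_sub]
  rw [inner_sub_left, real_inner_smul_left, real_inner_smul_left, h1, h2,
    inner_sub_right, inner_sub_right]
  have hp : ⟪u, v⟫ ≤ a * b := real_inner_le_norm u v
  have hvu : ⟪v, u⟫ = ⟪u, v⟫ := real_inner_comm u v
  have huu : ⟪u, u⟫ = a ^ 2 := real_inner_self_eq_norm_sq u
  have hvv : ⟪v, v⟫ = b ^ 2 := real_inner_self_eq_norm_sq v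
  rw [hvu, huu, hvv]
  rcases lt_trichotomy a b with hab | hab | hab
  · have hkey := g_strictMono_aux α β hα hβ (norm_nonneg u) hab
    rw [← hfa, ← hfb] at hkey
    have hprod : 0 < (fb * b - fa * a) * (b - a) :=
      mul_pos (by linarith [mul_comm fa a, mul_comm fb b]) (by linarith)
    nlinarith [mul_nonneg (by positivity : (0:ℝ) ≤ fa + fb) (sub_nonneg.mpr hp)]
  · have hfab : fa = fb := by rw [hfa, hfb, hab]
    have hnuv : 0 < ‖u - v‖ := norm_sub_pos_iff.mpr huv
    have hsq : ‖u - v‖ ^ 2 = a ^ 2 - 2 * ⟪u, v⟫ + b ^ 2 := norm_sub_sq_real u v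
    nlinarith [sq_nonneg ‖u - v‖, mul_pos hfa0 (pow_pos hnuv 2)]
  · have hkey := g_strictMono_aux α β hα hβ (norm_nonneg v) hab
    rw [← hfb, ← hfa] at hkey
    have hprod : 0 < (fa * a - fb * b) * (a - b) :=
      mul_pos (by linarith [mul_comm fa a, mul_comm fb b]) (by linarith)
    nlinarith [mul_nonneg (by positivity : (0:ℝ) ≤ fa + fb) (sub_nonneg.mpr hp)]
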